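/- arXiv:1803.04124 — 4 statements merged into one kernel-verified Lean document; each statement's English description precedes it below -/
import Mathlib

section
/- Let A be a bimonoid and B a Hopf monoid with antipode z in M, and let s : A → B and i : B → A be bimonoid morphisms with s∘i = 1_B and c∘(s⊗1_A)∘δ_A = (1_A⊗s)∘δ_A. Let j : E → A be the equalizer of (1_A⊗s)∘δ_A and 1_A⊗u_B, let r : A → E⊗B be the unique morphism with (j⊗1_B)∘r = (⃗s⊗s)∘δ_A where ⃗s := m_A∘(1_A⊗(i∘z∘s))∘δ_A, and set g := (1_E⊗ε_B)∘r : A → E. Then g∘j = 1_E and j∘g = ⃗s; in particular j is a split monomorphism in M. -/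
open CategoryTheory Category MonoidalCategory Limits

universe v u

variable {C : Type u} [Category.{v} C] [MonoidalCategory C]

/-- The middle-four interchange `(W ⊗ X) ⊗ (Y ⊗ Z) ⟶ (W ⊗ Y) ⊗ (X ⊗ Z)`,
i.e. `1 ⊗ c ⊗ 1` with the (suppressed) coherence isomorphisms inserted. -/
def mid4 [BraidedCategory C] (W X Y Z : C) :
    (W ⊗ X) ⊗ (Y ⊗ Z) ⟶ (W ⊗ Y) ⊗ (X ⊗ Z) :=
  (α_ W X (Y ⊗ Z)).hom ≫ (W ◁ (α_ X Y Z).inv) ≫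
    (W ◁ ((β_ X Y).hom ▷ Z)) ≫ (W ◁ (α_ Y X Z).hom) ≫ (α_ W Y (X ⊗ Z)).inv

/-- A monoid structure `(A, m, u)` on the object `A`. -/
structure MonObj (A : C) where
  mul : A ⊗ A ⟶ A
  one : 𝟙_ C ⟶ A
  one_mul : (one ▷ A) ≫ mul = (λ_ A).hom
  mul_one : (A ◁ one) ≫ mul = (ρ_ A).hom
  mul_assoc : (mul ▷ A) ≫ mul = (α_ A A A).hom ≫ (A ◁ mul) ≫ mul

/-- A comonoid structure `(A, δ, ε)` on the object `A`. -/
structure ComonObj (A : C) where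
  comul : A ⟶ A ⊗ A
  counit : A ⟶ 𝟙_ C
  counit_comul : comul ≫ (counit ▷ A) = (λ_ A).inv
  comul_counit : comul ≫ (A ◁ counit) = (ρ_ A).inv
  comul_assoc : comul ≫ (comul ▷ A) ≫ (α_ A A A).hom = comul ≫ (A ◁ comul)

/-- A bimonoid structure on the object `A`: a monoid and comonoid structure such that
the comultiplication and counit are monoid morphisms (`A ⊗ A` carrying the multiplication
`(m ⊗ m) ∘ (1 ⊗ c ⊗ 1)` and unit `u ⊗ u`). -/
structure BimonObj [BraidedCategory C] (A : C) extends _root_.MonObj A, _root_.ComonObj A where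
  mul_comul : mul ≫ comul = (comul ⊗ₘ comul) ≫ mid4 A A A A ≫ (mul ⊗ₘ mul)
  one_comul : one ≫ comul = (λ_ (𝟙_ C)).inv ≫ (one ⊗ₘ one)
  mul_counit : mul ≫ counit = (counit ⊗ₘ counit) ≫ (λ_ (𝟙_ C)).hom
  one_counit : one ≫ counit = 𝟙 (𝟙_ C)

/-- `f` is a morphism of monoids. -/
def IsMonHom {A B : C} (MA : _root_.MonObj A) (MB : _root_.MonObj B) (f : A ⟶ B) : Prop :=
  MA.mul ≫ f = (f ⊗ₘ f) ≫ MB.mul ∧ MA.one ≫ f = MB.one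

/-- `f` is a morphism of comonoids. -/
def IsComonHom {A B : C} (MA : _root_.ComonObj A) (MB : _root_.ComonObj B) (f : A ⟶ B) : Prop :=
  f ≫ MB.comul = MA.comul ≫ (f ⊗ₘ f) ∧ f ≫ MB.counit = MA.counit

/-- `f` is a morphism of bimonoids (preserves all four structure maps). -/
def IsBimonHom [BraidedCategory C] {A B : C} (MA : _root_.BimonObj A) (MB : _root_.BimonObj B)
    (f : A ⟶ B) : Prop :=
  IsMonHom MA.toMonObj MB.toMonObj f ∧ IsComonHom MA.toComonObj MB.toComonObj f

/-- `z` is an antipode for the bimonoid `M`, i.e. `M` is a Hopf monoid. -/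
def IsAntipode [BraidedCategory C] {B : C} (M : _root_.BimonObj B) (z : B ⟶ B) : Prop :=
  M.comul ≫ (z ▷ B) ≫ M.mul = M.counit ≫ M.one ∧
    M.comul ≫ (B ◁ z) ≫ M.mul = M.counit ≫ M.one

/-- A comonoid is cocommutative when `c ∘ δ = δ`. -/
def IsCocomm [BraidedCategory C] {A : C} (M : _root_.ComonObj A) : Prop :=
  M.comul ≫ (β_ A A).hom = M.comul

theorem statement5 [SymmetricCategory C] {A B E : C}
    (MA : _root_.BimonObj A) (MB : _root_.BimonObj B) (z : B ⟶ B) (hz : IsAntipode MB z)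
    (s : A ⟶ B) (i : B ⟶ A)
    (hs : IsBimonHom MA MB s) (hi : IsBimonHom MB MA i)
    (hsi : i ≫ s = 𝟙 B)
    (hcs : MA.comul ≫ (s ▷ A) ≫ (β_ B A).hom = MA.comul ≫ (A ◁ s))
    (j : E ⟶ A)
    (hw : j ≫ (MA.comul ≫ (A ◁ s)) = j ≫ ((ρ_ A).inv ≫ (A ◁ MB.one)))
    (hE : IsLimit (Fork.ofι j hw))
    (r : A ⟶ E ⊗ B)
    (hr : r ≫ (j ▷ B) = MA.comul ≫ ((MA.comul ≫ (A ◁ (s ≫ z ≫ i)) ≫ MA.mul) ⊗ₘ s))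
    (hruniq : ∀ r' : A ⟶ E ⊗ B,
        r' ≫ (j ▷ B) = MA.comul ≫ ((MA.comul ≫ (A ◁ (s ≫ z ≫ i)) ≫ MA.mul) ⊗ₘ s) →
        r' = r) :
    j ≫ (r ≫ (E ◁ MB.counit) ≫ (ρ_ E).hom) = 𝟙 E ∧
    (r ≫ (E ◁ MB.counit) ≫ (ρ_ E).hom) ≫ j =
      MA.comul ≫ (A ◁ (s ≫ z ≫ i)) ≫ MA.mul ∧
    IsSplitMono j := by
  obtain ⟨⟨hsmul, hsone⟩, ⟨hscomul, hscounit⟩⟩ := hs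
  obtain ⟨⟨himul, hione⟩, ⟨hicomul, hicounit⟩⟩ := hi
  -- the antipode preserves the unit
  have huz : MB.one ≫ z = MB.one := by
    have h := hz.1
    have h1 : MB.one ≫ MB.comul ≫ (z ▷ B) ≫ MB.mul = MB.one ≫ MB.counit ≫ MB.one := by
      rw [h]
    rw [reassoc_of% MB.one_comul] at h1
    conv_rhs at h1 => rw [← assoc, MB.one_counit, id_comp]
    calc MB.one ≫ z = (λ_ (𝟙_ C)).inv ≫ (MB.one ⊗ₘ MB.one) ≫ (z ▷ B) ≫ MB.mul := by
          rw [MonoidalCategory.tensorHom_def, assoc, whisker_exchange_assoc, MB.mul_one]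
          simp [← unitors_equal]
      _ = MB.one := h1
  -- j equalizes, so j ≫ svec = j
  have hjs : j ≫ MA.comul ≫ (A ◁ (s ≫ z ≫ i)) ≫ MA.mul = j := by
    have : j ≫ MA.comul ≫ (A ◁ (s ≫ z ≫ i)) ≫ MA.mul
        = (j ≫ MA.comul ≫ (A ◁ s)) ≫ (A ◁ (z ≫ i)) ≫ MA.mul := by
      simp [MonoidalCategory.whiskerLeft_comp]
    rw [this, hw]
    have : MB.one ≫ z ≫ i = MA.one := by rw [← assoc, huz, hione]
    simp only [assoc, ← MonoidalCategory.whiskerLeft_comp_assoc, this]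
    rw [MA.mul_one]
    simp
  -- g ≫ j = svec
  have hgj : (r ≫ (E ◁ MB.counit) ≫ (ρ_ E).hom) ≫ j
      = MA.comul ≫ (A ◁ (s ≫ z ≫ i)) ≫ MA.mul := by
    have e1 : (E ◁ MB.counit) ≫ (ρ_ E).hom ≫ j = (j ▷ B) ≫ (A ◁ MB.counit) ≫ (ρ_ A).hom := by
      rw [← whisker_exchange_assoc]
      simp
    simp only [assoc]
    rw [e1, reassoc_of% hr, MonoidalCategory.tensorHom_def]
    simp only [assoc]
    rw [← MonoidalCategory.whiskerLeft_comp_assoc, hscounit,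
      ← whisker_exchange_assoc, reassoc_of% MA.comul_counit]
    simp
  -- j is mono via the equalizer
  have h1 : j ≫ (r ≫ (E ◁ MB.counit) ≫ (ρ_ E).hom) = 𝟙 E := by
    apply Fork.IsLimit.hom_ext hE
    have hgj2 : r ≫ (E ◁ MB.counit) ≫ (ρ_ E).hom ≫ j
        = MA.comul ≫ (A ◁ (s ≫ z ≫ i)) ≫ MA.mul := by
      simpa only [assoc] using hgj
    simp only [Fork.ι_ofι, id_comp, assoc]
    rw [hgj2]
    simpa only [assoc] using hjs
  exact ⟨h1, hgj, ⟨⟨⟨r ≫ (E ◁ MB.counit) ≫ (ρ_ E).hom, h1⟩⟩⟩⟩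
end

section
/- Let B be a cocommutative bimonoid and Y a bimonoid in M, let l : B⊗Y → Y be a left action making Y a B-module monoid and a B-module comonoid, and let k : Y → B be a bimonoid morphism satisfying (k⊗1_Y)∘δ_Y = (k⊗1_Y)∘c∘δ_Y and m_B∘((k∘l)⊗1_B)∘(1_B⊗c_{B,Y})∘(δ_B⊗1_Y) = m_B∘(1_B⊗k). Set x := (l⊗1_B)∘(1_B⊗c_{B,Y})∘(δ_B⊗1_Y) : B⊗Y → Y⊗B and δ_{Y⊗B} := (1_Y⊗c_{Y,B}⊗1_B)∘(δ_Y⊗δ_B). Then the equation (of morphisms Y⊗B⊗Y → Y⊗B) (m_Y⊗1_B)∘(1_Y⊗x) = (m_Y⊗1_B)∘(l⊗1_Y⊗1_B)∘(1_B⊗c_{Y⊗B,Y})∘((m_B∘(k⊗1_B))⊗1_Y⊗1_B⊗1_Y)∘(δ_{Y⊗B}⊗1_Y) holds if and only if the Peiffer condition m_Y∘(l⊗1_Y)∘(k⊗1_Y⊗1_Y)∘(1_Y⊗c_{Y,Y})∘(δ_Y⊗1_Y) = m_Y holds. -/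
open CategoryTheory Category MonoidalCategory Limits

universe v u

variable {C : Type u} [Category.{v} C] [MonoidalCategory C]

/-- `l` is a left action of the monoid `B` on `Y`. -/
def IsAction {B Y : C} (MB : _root_.MonObj B) (l : B ⊗ Y ⟶ Y) : Prop :=
  (MB.one ▷ Y) ≫ l = (λ_ Y).hom ∧
    (MB.mul ▷ Y) ≫ l = (α_ B B Y).hom ≫ (B ◁ l) ≫ l

/-- The action `l` makes the monoid `Y` a `B`-module monoid. -/
def IsModuleMonoid [BraidedCategory C] {B Y : C} (MB : _root_.BimonObj B) (MY : _root_.MonObj Y)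
    (l : B ⊗ Y ⟶ Y) : Prop :=
  (ρ_ B).inv ≫ (B ◁ MY.one) ≫ l = MB.counit ≫ MY.one ∧
    (B ◁ MY.mul) ≫ l = (MB.comul ▷ (Y ⊗ Y)) ≫ mid4 B B Y Y ≫ (l ⊗ₘ l) ≫ MY.mul

/-- The action `l` makes the comonoid `Y` a `B`-module comonoid. -/
def IsModuleComonoid [BraidedCategory C] {B Y : C} (MB : _root_.BimonObj B) (MY : _root_.ComonObj Y)
    (l : B ⊗ Y ⟶ Y) : Prop :=
  l ≫ MY.counit = (MB.counit ⊗ₘ MY.counit) ≫ (λ_ (𝟙_ C)).hom ∧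
    l ≫ MY.comul = (MB.comul ⊗ₘ MY.comul) ≫ mid4 B B Y Y ≫ (l ⊗ₘ l)

/-- `x` is a distributive law from the monoid `B` to the monoid `Y`. -/
def IsDistLaw {B Y : C} (MB : _root_.MonObj B) (MY : _root_.MonObj Y) (x : B ⊗ Y ⟶ Y ⊗ B) : Prop :=
  (λ_ Y).inv ≫ (MB.one ▷ Y) ≫ x = (ρ_ Y).inv ≫ (Y ◁ MB.one) ∧
  (ρ_ B).inv ≫ (B ◁ MY.one) ≫ x = (λ_ B).inv ≫ (MY.one ▷ B) ∧
  (MB.mul ▷ Y) ≫ x =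
    (α_ B B Y).hom ≫ (B ◁ x) ≫ (α_ B Y B).inv ≫ (x ▷ B) ≫
      (α_ Y B B).hom ≫ (Y ◁ MB.mul) ∧
  (B ◁ MY.mul) ≫ x =
    (α_ B Y Y).inv ≫ (x ▷ Y) ≫ (α_ Y B Y).hom ≫ (Y ◁ x) ≫
      (α_ Y Y B).inv ≫ (MY.mul ▷ B)


section Aux
variable [SymmetricCategory C] {B Y : C}

/-- The map `x = (l ⊗ 1) ∘ (1 ⊗ c) ∘ (δ_B ⊗ 1)`. -/
def xmap (MB : _root_.BimonObj B) (l : B ⊗ Y ⟶ Y) : B ⊗ Y ⟶ Y ⊗ B :=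
  (MB.comul ▷ Y) ≫ (α_ B B Y).hom ≫ (B ◁ (β_ B Y).hom) ≫ (α_ B Y B).inv ≫ (l ▷ B)

lemma L1 (MB : _root_.BimonObj B) (l : B ⊗ Y ⟶ Y) (hl : IsAction MB.toMonObj l) :
    (MB.one ▷ Y) ≫ xmap MB l = (λ_ Y).hom ≫ (ρ_ Y).inv ≫ (Y ◁ MB.one) := by
  unfold xmap
  slice_lhs 1 2 => rw [← comp_whiskerRight, MB.one_comul]
  simp only [MonoidalCategory.tensorHom_def, comp_whiskerRight, assoc, whisker_assoc, Iso.inv_hom_id_assoc]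
  rw [← MonoidalCategory.whiskerLeft_comp_assoc, BraidedCategory.braiding_naturality_left]
  simp only [MonoidalCategory.whiskerLeft_comp, assoc]
  rw [associator_inv_naturality_right_assoc, whisker_exchange]
  have hβ : (β_ (𝟙_ C) Y).hom = (λ_ Y).hom ≫ (ρ_ Y).inv := by
    have h := braiding_rightUnitor (C := C) Y
    rw [← h]; simp
  rw [hβ]
  simp only [MonoidalCategory.whiskerLeft_comp, assoc]
  simp only [MonoidalCategory.triangle_assoc]
  slice_lhs 1 3 => rw [← comp_whiskerRight, ← comp_whiskerRight]
  rw [show (λ_ (𝟙_ C)).inv ≫ MB.one ▷ 𝟙_ C ≫ (ρ_ B).hom = MB.one from by simp [← unitors_equal]]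
  simp only [assoc]
  rw [← whisker_exchange_assoc, associator_inv_naturality_left_assoc]
  rw [← comp_whiskerRight_assoc, hl.1]
  monoidal

lemma Lcancel (MB : _root_.BimonObj B) (l : B ⊗ Y ⟶ Y) (hl : IsAction MB.toMonObj l)
    (Q : Y ⊗ Y ⟶ Y) :
    ((ρ_ Y).inv ▷ Y) ≫ ((Y ◁ MB.one) ▷ Y) ≫ (α_ Y B Y).hom ≫ (Y ◁ xmap MB l) ≫
      (α_ Y Y B).inv ≫ (Q ▷ B) ≫ (Y ◁ MB.counit) ≫ (ρ_ Y).hom = Q := by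
  rw [associator_naturality_middle_assoc]
  rw [← MonoidalCategory.whiskerLeft_comp_assoc, L1 MB l hl]
  simp only [MonoidalCategory.whiskerLeft_comp, assoc]
  rw [associator_inv_naturality_right_assoc]
  rw [whisker_exchange_assoc]
  slice_lhs 7 8 => rw [← MonoidalCategory.whiskerLeft_comp, MB.one_counit]
  simp only [MonoidalCategory.whiskerLeft_id, id_comp, assoc]
  monoidal

/-- The Peiffer composite. -/
def pmap (MY : _root_.BimonObj Y) (l : B ⊗ Y ⟶ Y) (k : Y ⟶ B) : Y ⊗ Y ⟶ Y :=
  (MY.comul ▷ Y) ≫ (α_ Y Y Y).hom ≫ (Y ◁ (β_ Y Y).hom) ≫ (k ▷ (Y ⊗ Y)) ≫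
    (α_ B Y Y).inv ≫ (l ▷ Y) ≫ MY.mul

/-- Normal form. -/
def NF (MB : _root_.BimonObj B) (MY : _root_.BimonObj Y) (l : B ⊗ Y ⟶ Y) (k : Y ⟶ B) :
    (Y ⊗ B) ⊗ Y ⟶ Y ⊗ B :=
  ((MY.comul ▷ B) ▷ Y)
  ≫ (((Y ⊗ Y) ◁ MB.comul) ▷ Y)
  ≫ (((k ▷ Y) ▷ (B ⊗ B)) ▷ Y)
  ≫ ((mid4 B Y B B) ▷ Y)
  ≫ (α_ (B ⊗ B) (Y ⊗ B) Y).hom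
  ≫ ((B ⊗ B) ◁ (β_ (Y ⊗ B) Y).hom)
  ≫ (α_ (B ⊗ B) Y (Y ⊗ B)).inv
  ≫ ((α_ B B Y).hom ▷ (Y ⊗ B))
  ≫ ((B ◁ l) ▷ (Y ⊗ B))
  ≫ (l ▷ (Y ⊗ B))
  ≫ (α_ Y Y B).inv
  ≫ (MY.mul ▷ B)

lemma mid4_natural_left {W W' X Y Z : C} (f : W ⟶ W') :
    ((f ▷ X) ▷ (Y ⊗ Z)) ≫ mid4 W' X Y Z = mid4 W X Y Z ≫ ((f ▷ Y) ▷ (X ⊗ Z)) := by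
  unfold mid4
  rw [associator_naturality_left_assoc, ← whisker_exchange_assoc, ← whisker_exchange_assoc,
    ← whisker_exchange_assoc, associator_inv_naturality_left]
  simp only [assoc]

lemma L2a (MB : _root_.BimonObj B) (MY : _root_.BimonObj Y) (l : B ⊗ Y ⟶ Y) (k : Y ⟶ B)
    (hl : IsAction MB.toMonObj l) :
    (((MY.comul ⊗ₘ MB.comul) ≫ mid4 Y Y B B) ▷ Y) ≫
        ((((k ▷ B) ≫ MB.mul) ▷ (Y ⊗ B)) ▷ Y) ≫
        (α_ B (Y ⊗ B) Y).hom ≫ (B ◁ (β_ (Y ⊗ B) Y).hom) ≫ (α_ B Y (Y ⊗ B)).inv ≫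
        (l ▷ (Y ⊗ B)) ≫ (α_ Y Y B).inv ≫ (MY.mul ▷ B) = NF MB MY l k := by
  unfold NF
  simp only [comp_whiskerRight, assoc, MonoidalCategory.tensorHom_def]
  slice_lhs 3 4 => rw [← comp_whiskerRight, ← mid4_natural_left, comp_whiskerRight]
  simp only [assoc]
  rw [associator_naturality_left_assoc, ← whisker_exchange_assoc,
    associator_inv_naturality_left_assoc]
  slice_lhs 8 9 => rw [← comp_whiskerRight, hl.2]
  simp only [comp_whiskerRight, assoc]

set_option maxHeartbeats 1000000 in
lemma L2b (MB : _root_.BimonObj B) (MY : _root_.BimonObj Y) (l : B ⊗ Y ⟶ Y) (k : Y ⟶ B) :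
    (α_ Y B Y).hom ≫ (Y ◁ xmap MB l) ≫ (α_ Y Y B).inv ≫ (pmap MY l k ▷ B) =
      NF MB MY l k := by
  unfold pmap
  simp only [comp_whiskerRight, assoc]
  rw [← associator_inv_naturality_left_assoc, whisker_exchange_assoc,
    ← associator_naturality_left_assoc]
  slice_lhs 6 7 => rw [← comp_whiskerRight, whisker_exchange, comp_whiskerRight]
  simp only [assoc]
  slice_lhs 5 6 => rw [← comp_whiskerRight, ← associator_naturality_left, comp_whiskerRight]
  simp only [assoc]
  rw [← associator_inv_naturality_left_assoc, whisker_exchange_assoc,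
    ← associator_naturality_left_assoc]
  rw [show xmap MB l = (MB.comul ▷ Y) ≫ ((α_ B B Y).hom ≫ (B ◁ (β_ B Y).hom) ≫
    (α_ B Y B).inv ≫ (l ▷ B)) from by simp [xmap]]
  rw [MonoidalCategory.whiskerLeft_comp]
  simp only [assoc]
  rw [← associator_naturality_middle_assoc]
  have hkd : (((k ▷ Y) ▷ B) ▷ Y) ≫ (((B ⊗ Y) ◁ MB.comul) ▷ Y) =
      (((Y ⊗ Y) ◁ MB.comul) ▷ Y) ≫ (((k ▷ Y) ▷ (B ⊗ B)) ▷ Y) := by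
    rw [← comp_whiskerRight, ← whisker_exchange, comp_whiskerRight]
  rw [reassoc_of% hkd]
  unfold NF
  simp only [MonoidalCategory.whiskerLeft_comp, assoc]
  -- LHS pushes: move the inner l to the right
  rw [associator_inv_naturality_middle_assoc]
  have h2 : (((B ⊗ Y) ◁ l) ▷ B) ≫ ((α_ B Y Y).hom ▷ B) =
      ((α_ B Y (B ⊗ Y)).hom ▷ B) ≫ ((B ◁ (Y ◁ l)) ▷ B) := by
    rw [← comp_whiskerRight, associator_naturality_right, comp_whiskerRight]
  rw [reassoc_of% h2]
  have h3 : ((B ◁ (Y ◁ l)) ▷ B) ≫ ((B ◁ (β_ Y Y).hom) ▷ B) =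
      ((B ◁ (β_ Y (B ⊗ Y)).hom) ▷ B) ≫ ((B ◁ (l ▷ Y)) ▷ B) := by
    rw [← comp_whiskerRight, ← MonoidalCategory.whiskerLeft_comp,
      BraidedCategory.braiding_naturality_right, MonoidalCategory.whiskerLeft_comp,
      comp_whiskerRight]
  rw [reassoc_of% h3]
  have h4 : ((B ◁ (l ▷ Y)) ▷ B) ≫ ((α_ B Y Y).inv ▷ B) =
      ((α_ B (B ⊗ Y) Y).inv ▷ B) ≫ (((B ◁ l) ▷ Y) ▷ B) := by
    rw [← comp_whiskerRight, associator_inv_naturality_middle, comp_whiskerRight]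
  rw [reassoc_of% h4]
  -- RHS pushes
  conv_rhs => rw [associator_inv_naturality_left_assoc]
  conv_rhs => rw [associator_inv_naturality_left_assoc]
  conv_rhs => rw [associator_inv_naturality_left_assoc]
  have hstruct : (α_ (B ⊗ Y) (B ⊗ B) Y).hom ≫ ((B ⊗ Y) ◁ (α_ B B Y).hom) ≫
      ((B ⊗ Y) ◁ (B ◁ (β_ B Y).hom)) ≫ ((B ⊗ Y) ◁ (α_ B Y B).inv) ≫
      (α_ (B ⊗ Y) (B ⊗ Y) B).inv ≫ ((α_ B Y (B ⊗ Y)).hom ▷ B) ≫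
      ((B ◁ (β_ Y (B ⊗ Y)).hom) ▷ B) ≫ ((α_ B (B ⊗ Y) Y).inv ▷ B) =
      (mid4 B Y B B ▷ Y) ≫ (α_ (B ⊗ B) (Y ⊗ B) Y).hom ≫
      ((B ⊗ B) ◁ (β_ (Y ⊗ B) Y).hom) ≫ (α_ (B ⊗ B) Y (Y ⊗ B)).inv ≫
      (α_ ((B ⊗ B) ⊗ Y) Y B).inv ≫ ((α_ B B Y).hom ▷ Y ▷ B) := by
    simp only [mid4, BraidedCategory.braiding_tensor_left_hom, BraidedCategory.braiding_tensor_right_hom,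
      MonoidalCategory.whiskerLeft_comp, comp_whiskerRight, whisker_assoc, assoc,
      Iso.inv_hom_id_assoc, Iso.hom_inv_id_assoc]
    have hswap : ((B ⊗ (Y ⊗ B)) ◁ (β_ B Y).hom) ≫ ((B ◁ (β_ Y B).hom) ▷ (Y ⊗ B)) =
        ((B ◁ (β_ Y B).hom) ▷ (B ⊗ Y)) ≫ ((B ⊗ (B ⊗ Y)) ◁ (β_ B Y).hom) :=
      whisker_exchange (B ◁ (β_ Y B).hom) ((β_ B Y).hom)
    calc _ = ((α_ (B ⊗ Y) (B ⊗ B) Y).hom ≫ ((B ⊗ Y) ◁ (α_ B B Y).hom) ≫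
            (α_ (B ⊗ Y) B (B ⊗ Y)).inv ≫ ((α_ B Y B).hom ▷ (B ⊗ Y))) ≫
            ((B ⊗ (Y ⊗ B)) ◁ (β_ B Y).hom) ≫ ((B ◁ (β_ Y B).hom) ▷ (Y ⊗ B)) ≫
            (((α_ B B Y).inv ▷ (Y ⊗ B)) ≫ (α_ (B ⊗ B) Y (Y ⊗ B)).hom ≫
              ((B ⊗ B) ◁ (α_ Y Y B).inv) ≫ (α_ (B ⊗ B) (Y ⊗ Y) B).inv) ≫
            (((B ⊗ B) ◁ (β_ Y Y).hom) ▷ B) ≫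
            (((α_ (B ⊗ B) Y Y).inv ≫ ((α_ B B Y).hom ▷ Y)) ▷ B) := by monoidal
      _ = ((α_ (B ⊗ Y) (B ⊗ B) Y).hom ≫ ((B ⊗ Y) ◁ (α_ B B Y).hom) ≫
            (α_ (B ⊗ Y) B (B ⊗ Y)).inv ≫ ((α_ B Y B).hom ▷ (B ⊗ Y))) ≫
            ((B ◁ (β_ Y B).hom) ▷ (B ⊗ Y)) ≫ ((B ⊗ (B ⊗ Y)) ◁ (β_ B Y).hom) ≫
            (((α_ B B Y).inv ▷ (Y ⊗ B)) ≫ (α_ (B ⊗ B) Y (Y ⊗ B)).hom ≫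
              ((B ⊗ B) ◁ (α_ Y Y B).inv) ≫ (α_ (B ⊗ B) (Y ⊗ Y) B).inv) ≫
            (((B ⊗ B) ◁ (β_ Y Y).hom) ▷ B) ≫
            (((α_ (B ⊗ B) Y Y).inv ≫ ((α_ B B Y).hom ▷ Y)) ▷ B) := by
          rw [reassoc_of% hswap]
      _ = _ := by monoidal
  rw [reassoc_of% hstruct]

lemma Lcancel2 (MB : _root_.BimonObj B) (l : B ⊗ Y ⟶ Y) (hl : IsAction MB.toMonObj l)
    (Q : Y ⊗ Y ⟶ Y) :
    ((ρ_ Y).inv ▷ Y) ≫ ((Y ◁ MB.one) ▷ Y) ≫ ((α_ Y B Y).hom ≫ (Y ◁ xmap MB l) ≫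
      (α_ Y Y B).inv ≫ (Q ▷ B)) ≫ (Y ◁ MB.counit) ≫ (ρ_ Y).hom = Q := by
  simpa only [assoc] using Lcancel MB l hl Q

lemma Lcancel' (MB : _root_.BimonObj B) (l : B ⊗ Y ⟶ Y) (hl : IsAction MB.toMonObj l)
    (Q Q' : Y ⊗ Y ⟶ Y)
    (h : (α_ Y B Y).hom ≫ (Y ◁ xmap MB l) ≫ (α_ Y Y B).inv ≫ (Q ▷ B) =
      (α_ Y B Y).hom ≫ (Y ◁ xmap MB l) ≫ (α_ Y Y B).inv ≫ (Q' ▷ B)) : Q = Q' := by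
  rw [← Lcancel2 MB l hl Q, h, Lcancel2 MB l hl Q']

end Aux
theorem statement9 [SymmetricCategory C] {B Y : C}
    (MB : _root_.BimonObj B) (hcoc : IsCocomm MB.toComonObj)
    (MY : _root_.BimonObj Y)
    (l : B ⊗ Y ⟶ Y) (hl : IsAction MB.toMonObj l)
    (hlm : IsModuleMonoid MB MY.toMonObj l)
    (hlc : IsModuleComonoid MB MY.toComonObj l)
    (k : Y ⟶ B) (hk : IsBimonHom MY MB k)
    (hkc : MY.comul ≫ (k ▷ Y) = MY.comul ≫ (β_ Y Y).hom ≫ (k ▷ Y))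
    (hpre : (MB.comul ▷ Y) ≫ (α_ B B Y).hom ≫ (B ◁ (β_ B Y).hom) ≫ (α_ B Y B).inv ≫
        ((l ≫ k) ▷ B) ≫ MB.mul = (B ◁ k) ≫ MB.mul) :
    (α_ Y B Y).hom ≫
        (Y ◁ ((MB.comul ▷ Y) ≫ (α_ B B Y).hom ≫ (B ◁ (β_ B Y).hom) ≫
          (α_ B Y B).inv ≫ (l ▷ B))) ≫
        (α_ Y Y B).inv ≫ (MY.mul ▷ B) =
      (((MY.comul ⊗ₘ MB.comul) ≫ mid4 Y Y B B) ▷ Y) ≫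
        ((((k ▷ B) ≫ MB.mul) ▷ (Y ⊗ B)) ▷ Y) ≫
        (α_ B (Y ⊗ B) Y).hom ≫ (B ◁ (β_ (Y ⊗ B) Y).hom) ≫ (α_ B Y (Y ⊗ B)).inv ≫
        (l ▷ (Y ⊗ B)) ≫ (α_ Y Y B).inv ≫ (MY.mul ▷ B) ↔
    (MY.comul ▷ Y) ≫ (α_ Y Y Y).hom ≫ (Y ◁ (β_ Y Y).hom) ≫ (k ▷ (Y ⊗ Y)) ≫
        (α_ B Y Y).inv ≫ (l ▷ Y) ≫ MY.mul = MY.mul := by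
  have key : ∀ Q : Y ⊗ Y ⟶ Y, (α_ Y B Y).hom ≫
      (Y ◁ ((MB.comul ▷ Y) ≫ (α_ B B Y).hom ≫ (B ◁ (β_ B Y).hom) ≫
        (α_ B Y B).inv ≫ (l ▷ B))) ≫ (α_ Y Y B).inv ≫ (Q ▷ B) =
      (α_ Y B Y).hom ≫ (Y ◁ xmap MB l) ≫ (α_ Y Y B).inv ≫ (Q ▷ B) := fun _ => rfl
  rw [key MY.mul, L2a MB MY l k hl, ← L2b MB MY l k]
  show _ ↔ pmap MY l k = MY.mul
  constructor
  · intro h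
    exact (Lcancel' MB l hl MY.mul (pmap MY l k) h).symm
  · intro h
    rw [h]
end

section
/- Let B and Y be bimonoids in M with B cocommutative, and let x : B⊗Y → Y⊗B be a distributive law from the monoid B to the monoid Y which is a comonoid morphism, i.e. (1_Y⊗c_{Y,B}⊗1_B)∘(δ_Y⊗δ_B)∘x = (x⊗x)∘(1_B⊗c_{B,Y}⊗1_Y)∘(δ_B⊗δ_Y) and (ε_Y⊗ε_B)∘x = ε_B⊗ε_Y, and which satisfies (ε_Y⊗1_B)∘x = 1_B⊗ε_Y. Then the left action l := (1_Y⊗ε_B)∘x makes Y a B-module monoid: l∘(1_B⊗u_Y) = u_Y∘ε_B and l∘(1_B⊗m_Y) = m_Y∘(l⊗l)∘(1_B⊗c_{B,Y}⊗1_Y)∘(δ_B⊗1_Y⊗1_Y). -/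
open CategoryTheory Category MonoidalCategory Limits

universe v u

variable {C : Type u} [Category.{v} C] [MonoidalCategory C]

set_option maxHeartbeats 1000000 in
theorem statement11 [SymmetricCategory C] {B Y : C}
    (MB : _root_.BimonObj B) (hcoc : IsCocomm MB.toComonObj)
    (MY : _root_.BimonObj Y)
    (x : B ⊗ Y ⟶ Y ⊗ B) (hx : IsDistLaw MB.toMonObj MY.toMonObj x)
    (hxδ : x ≫ (MY.comul ⊗ₘ MB.comul) ≫ mid4 Y Y B B =
      (MB.comul ⊗ₘ MY.comul) ≫ mid4 B B Y Y ≫ (x ⊗ₘ x))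
    (hxε : x ≫ (MY.counit ⊗ₘ MB.counit) = MB.counit ⊗ₘ MY.counit)
    (hxe : x ≫ (MY.counit ▷ B) ≫ (λ_ B).hom = (B ◁ MY.counit) ≫ (ρ_ B).hom) :
    IsModuleMonoid MB MY.toMonObj (x ≫ (Y ◁ MB.counit) ≫ (ρ_ Y).hom) := by
  have hmid : ∀ (W X Y Z : C), mid4 W X Y Z = tensorμ W X Y Z := fun _ _ _ _ => rfl
  constructor
  · -- unit axiom
    have h := hx.2.1
    calc (ρ_ B).inv ≫ (B ◁ MY.one) ≫ (x ≫ (Y ◁ MB.counit) ≫ (ρ_ Y).hom)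
        = ((ρ_ B).inv ≫ (B ◁ MY.one) ≫ x) ≫ (Y ◁ MB.counit) ≫ (ρ_ Y).hom := by
          simp [Category.assoc]
      _ = ((λ_ B).inv ≫ (MY.one ▷ B)) ≫ (Y ◁ MB.counit) ≫ (ρ_ Y).hom := by rw [h]
      _ = MB.counit ≫ MY.one := by
          simp only [Category.assoc]
          rw [← whisker_exchange_assoc]
          simp [unitors_inv_equal]
  · -- multiplication axiom
    have coh1 : ((ρ_ Y).inv ⊗ₘ (λ_ B).inv) ≫ tensorμ Y (𝟙_ C) (𝟙_ C) B ≫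
        ((ρ_ Y).hom ⊗ₘ (λ_ B).hom) = 𝟙 (Y ⊗ B) := by
      simp only [tensorμ, braiding_tensorUnit_left, MonoidalCategory.tensorHom_def]
      coherence
    have coh2 : ((B ⊗ B) ◁ (ρ_ Y).inv) ≫ tensorμ B B Y (𝟙_ C) ≫ ((B ⊗ Y) ◁ (ρ_ B).hom) =
        (α_ B B Y).hom ≫ (B ◁ (β_ B Y).hom) ≫ (α_ B Y B).inv := by
      simp [tensorμ]
    set l : B ⊗ Y ⟶ Y := x ≫ (Y ◁ MB.counit) ≫ (ρ_ Y).hom with hl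
    have keyA : x = (MB.comul ▷ Y) ≫ (α_ B B Y).hom ≫ (B ◁ (β_ B Y).hom) ≫
        (α_ B Y B).inv ≫ (l ▷ B) := by
      have h := congrArg
        (· ≫ (((Y ◁ MB.counit) ≫ (ρ_ Y).hom) ⊗ₘ ((MY.counit ▷ B) ≫ (λ_ B).hom))) hxδ
      simp only [hmid, Category.assoc] at h
      -- simplify LHS of h to x
      have hLHS : x ≫ (MY.comul ⊗ₘ MB.comul) ≫ tensorμ Y Y B B ≫
          (((Y ◁ MB.counit) ≫ (ρ_ Y).hom) ⊗ₘ ((MY.counit ▷ B) ≫ (λ_ B).hom)) = x := by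
        calc x ≫ (MY.comul ⊗ₘ MB.comul) ≫ tensorμ Y Y B B ≫
              (((Y ◁ MB.counit) ≫ (ρ_ Y).hom) ⊗ₘ ((MY.counit ▷ B) ≫ (λ_ B).hom))
            = x ≫ (MY.comul ⊗ₘ MB.comul) ≫
              (((𝟙 Y ⊗ₘ MY.counit) ⊗ₘ (MB.counit ⊗ₘ 𝟙 B)) ≫ tensorμ Y (𝟙_ C) (𝟙_ C) B) ≫
              ((ρ_ Y).hom ⊗ₘ (λ_ B).hom) := by
                rw [tensorμ_natural]
                simp [← tensorHom_comp_tensorHom, id_tensorHom, tensorHom_id]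
          _ = x ≫ ((ρ_ Y).inv ⊗ₘ (λ_ B).inv) ≫ tensorμ Y (𝟙_ C) (𝟙_ C) B ≫
              ((ρ_ Y).hom ⊗ₘ (λ_ B).hom) := by
                simp only [Category.assoc]
                rw [tensorHom_comp_tensorHom_assoc]
                simp [id_tensorHom, tensorHom_id, MY.comul_counit, MB.counit_comul]
          _ = x := by rw [coh1]; simp
      rw [hLHS] at h
      -- simplify RHS of h
      calc x = (MB.comul ⊗ₘ MY.comul) ≫ tensorμ B B Y Y ≫ (x ⊗ₘ x) ≫
              (((Y ◁ MB.counit) ≫ (ρ_ Y).hom) ⊗ₘ ((MY.counit ▷ B) ≫ (λ_ B).hom)) := h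
        _ = (MB.comul ⊗ₘ MY.comul) ≫ tensorμ B B Y Y ≫
              (l ⊗ₘ ((B ◁ MY.counit) ≫ (ρ_ B).hom)) := by
                rw [tensorHom_comp_tensorHom]
                rw [hxe, ← hl]
        _ = (MB.comul ⊗ₘ MY.comul) ≫ (tensorμ B B Y Y ≫
              ((𝟙 B ⊗ₘ 𝟙 Y) ⊗ₘ (𝟙 B ⊗ₘ MY.counit))) ≫ (l ⊗ₘ (ρ_ B).hom) := by
                simp only [Category.assoc, tensorHom_comp_tensorHom_assoc, tensorHom_comp_tensorHom,
                  Category.id_comp, Category.comp_id, id_tensorHom]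
                simp
        _ = ((MB.comul ≫ (𝟙 B ⊗ₘ 𝟙 B)) ⊗ₘ (MY.comul ≫ (𝟙 Y ⊗ₘ MY.counit))) ≫
              tensorμ B B Y (𝟙_ C) ≫ (l ⊗ₘ (ρ_ B).hom) := by
                rw [← tensorμ_natural]
                simp only [Category.assoc, tensorHom_comp_tensorHom_assoc]
        _ = (MB.comul ⊗ₘ (ρ_ Y).inv) ≫ tensorμ B B Y (𝟙_ C) ≫ (l ⊗ₘ (ρ_ B).hom) := by
                rw [show (𝟙 Y ⊗ₘ MY.counit) = Y ◁ MY.counit from id_tensorHom _ _,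
                  MY.comul_counit]
                simp
        _ = (MB.comul ▷ Y) ≫ ((B ⊗ B) ◁ (ρ_ Y).inv) ≫ tensorμ B B Y (𝟙_ C) ≫
              ((B ⊗ Y) ◁ (ρ_ B).hom) ≫ (l ▷ B) := by
                rw [tensorHom_def MB.comul (ρ_ Y).inv, tensorHom_def' l (ρ_ B).hom]
                simp only [Category.assoc]
        _ = (MB.comul ▷ Y) ≫ (α_ B B Y).hom ≫ (B ◁ (β_ B Y).hom) ≫
              (α_ B Y B).inv ≫ (l ▷ B) := by
                rw [reassoc_of% coh2]
    -- the main computation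
    have coh3 : (α_ (B ⊗ B) Y Y).inv ≫ ((α_ B B Y).hom ▷ Y) ≫ ((B ◁ (β_ B Y).hom) ▷ Y) ≫
        ((α_ B Y B).inv ▷ Y) ≫ (α_ (B ⊗ Y) B Y).hom = tensorμ B B Y Y := by
      simp [tensorμ]
    have step3 : (α_ Y Y B).inv ≫ (MY.mul ▷ B) ≫ (Y ◁ MB.counit) ≫
        (ρ_ Y).hom = (Y ◁ ((Y ◁ MB.counit) ≫ (ρ_ Y).hom)) ≫ MY.mul := by
      rw [← whisker_exchange_assoc]
      simp
    calc (B ◁ MY.mul) ≫ (x ≫ (Y ◁ MB.counit) ≫ (ρ_ Y).hom)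
        = ((B ◁ MY.mul) ≫ x) ≫ (Y ◁ MB.counit) ≫ (ρ_ Y).hom := by simp
      _ = (α_ B Y Y).inv ≫ (x ▷ Y) ≫ (α_ Y B Y).hom ≫ (Y ◁ x) ≫ (α_ Y Y B).inv ≫
            (MY.mul ▷ B) ≫ (Y ◁ MB.counit) ≫ (ρ_ Y).hom := by
              rw [hx.2.2.2]; simp
      _ = (α_ B Y Y).inv ≫ (x ▷ Y) ≫ (α_ Y B Y).hom ≫ (Y ◁ l) ≫ MY.mul := by
              rw [step3]
              simp [hl, MonoidalCategory.whiskerLeft_comp]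
      _ = (MB.comul ▷ (Y ⊗ Y)) ≫ (α_ (B ⊗ B) Y Y).inv ≫ ((α_ B B Y).hom ▷ Y) ≫
            ((B ◁ (β_ B Y).hom) ▷ Y) ≫ ((α_ B Y B).inv ▷ Y) ≫ ((l ▷ B) ▷ Y) ≫
            (α_ Y B Y).hom ≫ (Y ◁ l) ≫ MY.mul := by
              rw [keyA]
              simp only [comp_whiskerRight, Category.assoc,
                associator_inv_naturality_left_assoc]
      _ = (MB.comul ▷ (Y ⊗ Y)) ≫ tensorμ B B Y Y ≫ (l ▷ (B ⊗ Y)) ≫ (Y ◁ l) ≫ MY.mul := by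
              rw [← coh3]
              simp only [Category.assoc, associator_naturality_left_assoc]
      _ = (MB.comul ▷ (Y ⊗ Y)) ≫ mid4 B B Y Y ≫ (l ⊗ₘ l) ≫ MY.mul := by
              rw [hmid, MonoidalCategory.tensorHom_def]
              simp
end

section
/- Let B and Y be bimonoids in M with B cocommutative, and let x : B⊗Y → Y⊗B be a distributive law from the monoid B to the monoid Y which is a comonoid morphism, i.e. (1_Y⊗c_{Y,B}⊗1_B)∘(δ_Y⊗δ_B)∘x = (x⊗x)∘(1_B⊗c_{B,Y}⊗1_Y)∘(δ_B⊗δ_Y) and (ε_Y⊗ε_B)∘x = ε_B⊗ε_Y, and which satisfies (ε_Y⊗1_B)∘x = 1_B⊗ε_Y. Then the left action l := (1_Y⊗ε_B)∘x makes Y a B-module comonoid: ε_Y∘l = ε_B⊗ε_Y and δ_Y∘l = (l⊗l)∘(1_B⊗c_{B,Y}⊗1_Y)∘(δ_B⊗δ_Y). -/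
open CategoryTheory Category MonoidalCategory Limits

universe v u

variable {C : Type u} [Category.{v} C] [MonoidalCategory C]

private lemma mid4_counit_counit [BraidedCategory C] {Y B : C} (e : B ⟶ 𝟙_ C)
    (d : Y ⟶ Y ⊗ Y) (D : B ⟶ B ⊗ B)
    (hD : D ≫ (e ▷ B) = (λ_ B).inv) :
    (d ⊗ₘ D) ≫ mid4 Y Y B B ≫ (((Y ◁ e) ≫ (ρ_ Y).hom) ⊗ₘ ((Y ◁ e) ≫ (ρ_ Y).hom))
      = (Y ◁ e) ≫ (ρ_ Y).hom ≫ d := by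
  simp [mid4, MonoidalCategory.tensorHom_def, whisker_exchange]
  rw [← whiskerLeft_comp_assoc Y ((β_ Y B).hom ▷ B)]
  rw [show ((β_ Y B).hom ▷ B ≫ e ▷ Y ▷ B : (Y ⊗ B) ⊗ B ⟶ _) = ((β_ Y B).hom ≫ e ▷ Y) ▷ B by simp]
  rw [← BraidedCategory.braiding_naturality_right]
  simp [whisker_exchange]
  slice_lhs 3 4 => rw [← MonoidalCategory.whiskerLeft_comp, ← MonoidalCategory.whiskerLeft_comp, hD]
  slice_lhs 3 4 => rw [← MonoidalCategory.whiskerLeft_comp, ← MonoidalCategory.whiskerLeft_comp, Iso.inv_hom_id]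
  simp only [MonoidalCategory.whiskerLeft_id, id_comp, assoc]
  rw [associator_inv_naturality_right_assoc, Iso.hom_inv_id_assoc, ← whisker_exchange_assoc]
  simp

theorem statement12 [SymmetricCategory C] {B Y : C}
    (MB : _root_.BimonObj B) (hcoc : IsCocomm MB.toComonObj)
    (MY : _root_.BimonObj Y)
    (x : B ⊗ Y ⟶ Y ⊗ B) (hx : IsDistLaw MB.toMonObj MY.toMonObj x)
    (hxδ : x ≫ (MY.comul ⊗ₘ MB.comul) ≫ mid4 Y Y B B =
      (MB.comul ⊗ₘ MY.comul) ≫ mid4 B B Y Y ≫ (x ⊗ₘ x))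
    (hxε : x ≫ (MY.counit ⊗ₘ MB.counit) = MB.counit ⊗ₘ MY.counit)
    (hxe : x ≫ (MY.counit ▷ B) ≫ (λ_ B).hom = (B ◁ MY.counit) ≫ (ρ_ B).hom) :
    IsModuleComonoid MB MY.toComonObj (x ≫ (Y ◁ MB.counit) ≫ (ρ_ Y).hom) := by
  constructor
  · rw [assoc, assoc, ← rightUnitor_naturality, ← tensorHom_def'_assoc, ← assoc, hxε,
      MonoidalCategory.unitors_equal]
  · show (x ≫ (Y ◁ MB.counit) ≫ (ρ_ Y).hom) ≫ MY.comul = _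
    have key := mid4_counit_counit MB.counit MY.comul MB.comul MB.counit_comul
    calc (x ≫ (Y ◁ MB.counit) ≫ (ρ_ Y).hom) ≫ MY.comul
        = x ≫ ((MY.comul ⊗ₘ MB.comul) ≫ mid4 Y Y B B) ≫
            (((Y ◁ MB.counit) ≫ (ρ_ Y).hom) ⊗ₘ ((Y ◁ MB.counit) ≫ (ρ_ Y).hom)) := by
          rw [assoc, assoc, ← key]; simp only [assoc]
      _ = ((MB.comul ⊗ₘ MY.comul) ≫ mid4 B B Y Y ≫ (x ⊗ₘ x)) ≫
            (((Y ◁ MB.counit) ≫ (ρ_ Y).hom) ⊗ₘ ((Y ◁ MB.counit) ≫ (ρ_ Y).hom)) := by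
          rw [← hxδ]; simp
      _ = _ := by simp only [← tensorHom_comp_tensorHom, assoc]
end
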